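/- Let C₀ ≥ 1. Then there exists a constant C₁ = C₁(C₀) ≥ 1 such that for all x₁, x₂ > 0 and all κ₁, κ₂ ∈ (0,1) satisfying x₁/x₂ ∈ [1/C₀, C₀], κ₁/κ₂ ∈ [1/C₀, C₀] and (1−κ₁)/(1−κ₂) ∈ [1/C₀, C₀], one has 1/C₁ ≤ (H_{κ₁}(x₁) − 1)/(H_{κ₂}(x₂) − 1) ≤ C₁. -/

import Mathlib

noncomputable section

open Real MeasureTheory Set Filter

/-- Japanese bracket `⟨x⟩ := √(2+x²)`. -/
def jb (x : ℝ) : ℝ := Real.sqrt (2 + x ^ 2)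

/-- `κ(a,ℓ) := (1 + 4a²ℓ/m²)^{-1/2}`. -/
def kpa (m a ℓ : ℝ) : ℝ := 1 / Real.sqrt (1 + 4 * a ^ 2 * ℓ / m ^ 2)

/-- `p(a,ℓ) := m / (2a²κ(a,ℓ))`. -/
def pfn (m a ℓ : ℝ) : ℝ := m / (2 * a ^ 2 * kpa m a ℓ)

/-- `r₀(a,ℓ) := p(a,ℓ)(1-κ(a,ℓ))`. -/
def rZero (m a ℓ : ℝ) : ℝ := pfn m a ℓ * (1 - kpa m a ℓ)

/-- `G_κ(y) := √(y²-1) - κ ln(y + √(y²-1))`. -/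
def Gf (κ y : ℝ) : ℝ := Real.sqrt (y ^ 2 - 1) - κ * Real.log (y + Real.sqrt (y ^ 2 - 1))

/-- `H_κ : [0,∞) → [1,∞)`, the inverse of `G_κ` on `[1,∞)`. -/
def Hf (κ x : ℝ) : ℝ := Function.invFunOn (Gf κ) (Set.Ici 1) x

/-- Inverse hyperbolic cosine `arcosh x = ln (x + √(x²-1))`. -/
def acosh (x : ℝ) : ℝ := Real.log (x + Real.sqrt (x ^ 2 - 1))

/-- The radial function `R(θ,a,ℓ)`. -/
def Rf (m θ a ℓ : ℝ) : ℝ :=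
  pfn m a ℓ * Hf (kpa m a ℓ) (|θ| / pfn m a ℓ) - pfn m a ℓ * kpa m a ℓ

/-- The radial velocity `V(θ,a,ℓ)`. -/
def Vf (m θ a ℓ : ℝ) : ℝ :=
  Real.sign θ * a *
    Real.sqrt (1 + m / (a ^ 2 * Rf m θ a ℓ) - ℓ / (a ^ 2 * (Rf m θ a ℓ) ^ 2))

/-- The dynamical radial function `R̃(t,θ,a,ℓ) = R(θ+at,a,ℓ)`. -/
def Rtil (m t θ a ℓ : ℝ) : ℝ := Rf m (θ + a * t) a ℓ

/-- The action `𝒜(r,v,ℓ) = √(v² - m/r + ℓ/r²)`. -/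
def Acal (m r v ℓ : ℝ) : ℝ := Real.sqrt (v ^ 2 - m / r + ℓ / r ^ 2)

/-- The angle `Θ(r,v,ℓ) = sgn(v)·p(𝒜,ℓ)·G_{κ(𝒜,ℓ)}(r/p(𝒜,ℓ) + κ(𝒜,ℓ))`. -/
def Theta (m r v ℓ : ℝ) : ℝ :=
  Real.sign v * pfn m (Acal m r v ℓ) ℓ *
    Gf (kpa m (Acal m r v ℓ) ℓ) (r / pfn m (Acal m r v ℓ) ℓ + kpa m (Acal m r v ℓ) ℓ)

/-- The phase space `ℝ×(0,∞)×(0,∞)` in the variables `(θ,a,ℓ)`. -/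
def phaseSet : Set (ℝ × ℝ × ℝ) := Set.univ ×ˢ Set.Ioi 0 ×ˢ Set.Ioi 0

/-- The gravitational field
`F(t,r) = -(1/r²)·∫∫∫ 1_{R(θ+ta,a,ℓ) ≤ r} γ(θ,a,ℓ)² dθ da dℓ`. -/
def gravF (m : ℝ) (γ : ℝ × ℝ × ℝ → ℝ) (t r : ℝ) : ℝ :=
  -(1 / r ^ 2) *
    (∫⁻ x in {x : ℝ × ℝ × ℝ | Rf m (x.1 + t * x.2.1) x.2.1 x.2.2 ≤ r},
        ENNReal.ofReal ((γ x) ^ 2) ∂(volume.restrict phaseSet)).toReal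

/-- The effective gravitational field
`F_eff(t,r) = -(1/r²)·∫∫∫ 1_{at ≤ r} γ(θ,a,ℓ)² dθ da dℓ`. -/
def gravFeff (γ : ℝ × ℝ × ℝ → ℝ) (t r : ℝ) : ℝ :=
  -(1 / r ^ 2) *
    (∫⁻ x in {x : ℝ × ℝ × ℝ | x.2.1 * t ≤ r},
        ENNReal.ofReal ((γ x) ^ 2) ∂(volume.restrict phaseSet)).toReal


private lemma nonneg_on_Ici {f f' : ℝ → ℝ} (hd : ∀ t, HasDerivAt f (f' t) t)
    (h0 : 0 ≤ f 0) (hf' : ∀ t, 0 ≤ t → 0 ≤ f' t) : ∀ t, 0 ≤ t → 0 ≤ f t := by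
  intro t ht
  have mono : MonotoneOn f (Set.Ici 0) := by
    apply monotoneOn_of_deriv_nonneg (convex_Ici 0)
    · exact fun x _ => (hd x).continuousAt.continuousWithinAt
    · exact fun x _ => (hd x).differentiableAt.differentiableWithinAt
    · intro x hx
      rw [(hd x).deriv]
      exact hf' x (le_of_lt (by simpa [interior_Ici] using hx))
  exact le_trans h0 (mono (self_mem_Ici) ht ht)

private lemma sinh_le_mul_cosh {t : ℝ} (ht : 0 ≤ t) : Real.sinh t ≤ t * Real.cosh t := by
  have key : ∀ s, (0:ℝ) ≤ s → 0 ≤ s * Real.cosh s - Real.sinh s := by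
    apply nonneg_on_Ici (f' := fun s => s * Real.sinh s)
    · intro s
      have h := ((hasDerivAt_id s).mul (Real.hasDerivAt_cosh s)).sub (Real.hasDerivAt_sinh s)
      exact (h.congr_deriv (by simp only [id]; ring)).congr_of_eventuallyEq (Filter.Eventually.of_forall fun x => by simp)
    · simp
    · intro s hs
      exact mul_nonneg hs (Real.sinh_nonneg_iff.mpr hs)
  linarith [key t ht]

private lemma mul_cosh_le {t : ℝ} (ht : 0 ≤ t) :
    3 * t * Real.cosh t ≤ Real.sinh t * (3 + 2 * Real.sinh t ^ 2) := by
  have key : ∀ s, (0:ℝ) ≤ s →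
      0 ≤ Real.sinh s * (3 + 2 * Real.sinh s ^ 2) - 3 * (s * Real.cosh s) := by
    apply nonneg_on_Ici
      (f' := fun s => (Real.cosh s * (3 + 2 * Real.sinh s ^ 2)
        + Real.sinh s * (2 * ((2:ℕ) * Real.sinh s ^ 1 * Real.cosh s)))
        - 3 * (1 * Real.cosh s + s * Real.sinh s))
    · intro s
      exact ((Real.hasDerivAt_sinh s).mul
        ((((Real.hasDerivAt_sinh s).pow 2).const_mul (2:ℝ)).const_add 3)).sub
        (((hasDerivAt_id s).mul (Real.hasDerivAt_cosh s)).const_mul 3)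
    · simp
    · intro s hs
      have h1 : s ≤ Real.sinh s := Real.self_le_sinh_iff.mpr hs
      have h2 : 1 ≤ Real.cosh s := Real.one_le_cosh s
      have h3 : 0 ≤ Real.sinh s := Real.sinh_nonneg_iff.mpr hs
      simp only [pow_one, Nat.cast_ofNat]
      nlinarith [mul_nonneg h3 (mul_nonneg h3 (sub_nonneg.mpr h2)), mul_nonneg hs h3]
  linarith [key t ht]

private lemma arsinh_lb {u : ℝ} (hu : 0 ≤ u) : u ≤ Real.arsinh u * Real.sqrt (1 + u ^ 2) := by
  have hs : 0 ≤ Real.arsinh u := Real.arsinh_nonneg_iff.mpr hu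
  have h1 : Real.sinh (Real.arsinh u) = u := Real.sinh_arsinh u
  have h2 : Real.cosh (Real.arsinh u) = Real.sqrt (1 + u ^ 2) := Real.cosh_arsinh u
  calc u = Real.sinh (Real.arsinh u) := h1.symm
    _ ≤ Real.arsinh u * Real.cosh (Real.arsinh u) := sinh_le_mul_cosh hs
    _ = Real.arsinh u * Real.sqrt (1 + u ^ 2) := by rw [h2]

private lemma arsinh_ub {u : ℝ} (hu : 0 ≤ u) :
    3 * Real.arsinh u * Real.sqrt (1 + u ^ 2) ≤ u * (3 + 2 * u ^ 2) := by
  have hs : 0 ≤ Real.arsinh u := Real.arsinh_nonneg_iff.mpr hu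
  have h1 : Real.sinh (Real.arsinh u) = u := Real.sinh_arsinh u
  have h2 : Real.cosh (Real.arsinh u) = Real.sqrt (1 + u ^ 2) := Real.cosh_arsinh u
  calc 3 * Real.arsinh u * Real.sqrt (1 + u ^ 2)
      = 3 * Real.arsinh u * Real.cosh (Real.arsinh u) := by rw [h2]
    _ ≤ Real.sinh (Real.arsinh u) * (3 + 2 * Real.sinh (Real.arsinh u) ^ 2) :=
        mul_cosh_le hs
    _ = u * (3 + 2 * u ^ 2) := by rw [h1]

private lemma arsinh_le_self {u : ℝ} (hu : 0 ≤ u) : Real.arsinh u ≤ u := by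
  rw [← Real.sinh_le_sinh, Real.sinh_arsinh]
  exact Real.self_le_sinh_iff.mpr hu

/-- upper bound: `v√(1+v²) - arsinh v ≤ v³/√(1+v²)` -/
private lemma h_ub {v : ℝ} (hv : 0 ≤ v) :
    v * Real.sqrt (1 + v ^ 2) - Real.arsinh v ≤ v ^ 3 / Real.sqrt (1 + v ^ 2) := by
  have hc : 0 < Real.sqrt (1 + v ^ 2) := Real.sqrt_pos.mpr (by positivity)
  have hc2 : Real.sqrt (1 + v ^ 2) ^ 2 = 1 + v ^ 2 := Real.sq_sqrt (by positivity)
  rw [le_div_iff₀ hc]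
  have := arsinh_lb hv
  nlinarith
  
/-- lower bound: `v³/(3√(1+v²)) ≤ v√(1+v²) - arsinh v` -/
private lemma h_lb {v : ℝ} (hv : 0 ≤ v) :
    v ^ 3 / (3 * Real.sqrt (1 + v ^ 2)) ≤ v * Real.sqrt (1 + v ^ 2) - Real.arsinh v := by
  have hc : 0 < Real.sqrt (1 + v ^ 2) := Real.sqrt_pos.mpr (by positivity)
  have hc2 : Real.sqrt (1 + v ^ 2) ^ 2 = 1 + v ^ 2 := Real.sq_sqrt (by positivity)
  rw [div_le_iff₀ (by positivity)]
  have := arsinh_ub hv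
  nlinarith

set_option maxHeartbeats 1000000 in
private lemma core_ineq (C β₁ β₂ u D v : ℝ) (hC : 1 ≤ C) (hβ₁ : 0 < β₁) (hβ₁1 : β₁ ≤ 1)
    (hβ : β₂ ≤ C * β₁) (hu : 0 ≤ u) (hD2 : 2 * C ^ 4 ≤ D) (hD3 : 12 * C ^ 2 ≤ D)
    (hveq : v = D * u) :
    C * (β₂ * Real.arsinh u + (u * Real.sqrt (1 + u ^ 2) - Real.arsinh u)) ≤
      β₁ * Real.arsinh v + (v * Real.sqrt (1 + v ^ 2) - Real.arsinh v) := by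
  have hD1 : 1 ≤ D := by nlinarith
  have hv0 : 0 ≤ v := by rw [hveq]; positivity
  have hAu0 : 0 ≤ Real.arsinh u := Real.arsinh_nonneg_iff.mpr hu
  have hAv0 : 0 ≤ Real.arsinh v := Real.arsinh_nonneg_iff.mpr hv0
  have hAu_le : Real.arsinh u ≤ u := arsinh_le_self hu
  have hcu : 0 < Real.sqrt (1 + u ^ 2) := Real.sqrt_pos.mpr (by positivity)
  have hcu2 : Real.sqrt (1 + u ^ 2) ^ 2 = 1 + u ^ 2 := Real.sq_sqrt (by positivity)
  have hcv : 0 < Real.sqrt (1 + v ^ 2) := Real.sqrt_pos.mpr (by positivity)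
  have hcv2 : Real.sqrt (1 + v ^ 2) ^ 2 = 1 + v ^ 2 := Real.sq_sqrt (by positivity)
  have hhv0 : 0 ≤ v * Real.sqrt (1 + v ^ 2) - Real.arsinh v := by
    have h0 : (0:ℝ) ≤ v ^ 3 / (3 * Real.sqrt (1 + v ^ 2)) := by positivity
    linarith [h_lb hv0]
  -- step B : C * h(u) ≤ h(v)/2
  have hB : C * (u * Real.sqrt (1 + u ^ 2) - Real.arsinh u) ≤
      (v * Real.sqrt (1 + v ^ 2) - Real.arsinh v) / 2 := by
    have h1 := h_ub hu
    have h2 := h_lb hv0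
    have hsq : Real.sqrt (1 + v ^ 2) ≤ D * Real.sqrt (1 + u ^ 2) := by
      have hle : 1 + v ^ 2 ≤ (D * Real.sqrt (1 + u ^ 2)) ^ 2 := by
        rw [mul_pow, hcu2, hveq]; nlinarith
      calc Real.sqrt (1 + v ^ 2) ≤ Real.sqrt ((D * Real.sqrt (1 + u ^ 2)) ^ 2) :=
            Real.sqrt_le_sqrt hle
        _ = D * Real.sqrt (1 + u ^ 2) := Real.sqrt_sq (by positivity)
    have hkey : C * (u ^ 3 / Real.sqrt (1 + u ^ 2)) ≤ v ^ 3 / (6 * Real.sqrt (1 + v ^ 2)) := by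
      rw [show C * (u ^ 3 / Real.sqrt (1 + u ^ 2)) = (C * u ^ 3) / Real.sqrt (1 + u ^ 2) by ring]
      rw [div_le_div_iff₀ hcu (by positivity)]
      have e1 : C * u ^ 3 * (6 * Real.sqrt (1 + v ^ 2)) ≤
          C * u ^ 3 * (6 * (D * Real.sqrt (1 + u ^ 2))) := by
        apply mul_le_mul_of_nonneg_left (by linarith) (by positivity)
      have e2 : C * u ^ 3 * (6 * (D * Real.sqrt (1 + u ^ 2))) ≤ v ^ 3 * Real.sqrt (1 + u ^ 2) := by
        have hv3 : v ^ 3 = D ^ 3 * u ^ 3 := by rw [hveq]; ring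
        rw [hv3]
        have hDD : 12 * C ^ 2 * D ≤ D ^ 3 := by
          nlinarith [mul_le_mul_of_nonneg_right hD3 (by linarith : (0:ℝ) ≤ D),
            mul_le_mul_of_nonneg_left hD1 (sq_nonneg D)]
        have h6 : C * 6 * D ≤ D ^ 3 := by
          nlinarith [hDD, mul_nonneg (mul_nonneg (by linarith : (0:ℝ) ≤ 6 * C)
            (by linarith : (0:ℝ) ≤ 2 * C - 1)) (by linarith : (0:ℝ) ≤ D)]
        have hb : 0 ≤ u ^ 3 * Real.sqrt (1 + u ^ 2) := by positivity
        nlinarith [mul_le_mul_of_nonneg_right h6 hb]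
      linarith
    have hCh : C * (u * Real.sqrt (1 + u ^ 2) - Real.arsinh u) ≤
        C * (u ^ 3 / Real.sqrt (1 + u ^ 2)) :=
      mul_le_mul_of_nonneg_left h1 (by linarith)
    have hfin : v ^ 3 / (6 * Real.sqrt (1 + v ^ 2)) ≤
        (v * Real.sqrt (1 + v ^ 2) - Real.arsinh v) / 2 := by
      rw [div_le_div_iff₀ (by positivity) (by norm_num)]
      rw [div_le_iff₀ (by positivity)] at h2
      nlinarith
    linarith
  -- step A : C² β₁ arsinh u ≤ β₁ arsinh v + h(v)/2
  have hA : C ^ 2 * β₁ * Real.arsinh u ≤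
      β₁ * Real.arsinh v + (v * Real.sqrt (1 + v ^ 2) - Real.arsinh v) / 2 := by
    rcases le_or_gt (D * u ^ 2) 1 with hcase | hcase
    · -- small u : use arsinh v ≥ C² u
      have hsmall : Real.sqrt (1 + v ^ 2) ≤ Real.sqrt (1 + D) := by
        apply Real.sqrt_le_sqrt
        have hv2 : v ^ 2 = D * (D * u ^ 2) := by rw [hveq]; ring
        nlinarith
      have hDlb : C ^ 2 * Real.sqrt (1 + D) ≤ D := by
        have h1 : Real.sqrt (1 + D) ≤ D / C ^ 2 := by
          rw [show D / C ^ 2 = Real.sqrt ((D / C ^ 2) ^ 2) from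
            (Real.sqrt_sq (by positivity)).symm]
          apply Real.sqrt_le_sqrt
          rw [div_pow, le_div_iff₀ (by positivity)]
          nlinarith [mul_le_mul_of_nonneg_right hD2 (by linarith : (0:ℝ) ≤ D),
            mul_le_mul_of_nonneg_left hD1 (by positivity : (0:ℝ) ≤ C ^ 4),
            sq_nonneg C, sq_nonneg (C ^ 2)]
        calc C ^ 2 * Real.sqrt (1 + D) ≤ C ^ 2 * (D / C ^ 2) :=
              mul_le_mul_of_nonneg_left h1 (by positivity)
          _ = D := by field_simp
      have hCu : C ^ 2 * u ≤ Real.arsinh v := by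
        rw [← mul_le_mul_iff_of_pos_right hcv]
        calc C ^ 2 * u * Real.sqrt (1 + v ^ 2) ≤ C ^ 2 * u * Real.sqrt (1 + D) := by
              apply mul_le_mul_of_nonneg_left hsmall (by positivity)
          _ = u * (C ^ 2 * Real.sqrt (1 + D)) := by ring
          _ ≤ u * D := mul_le_mul_of_nonneg_left hDlb hu
          _ = v := by rw [hveq]; ring
          _ ≤ Real.arsinh v * Real.sqrt (1 + v ^ 2) := arsinh_lb hv0
      have h1 : C ^ 2 * β₁ * Real.arsinh u ≤ β₁ * (C ^ 2 * u) := by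
        nlinarith [mul_le_mul_of_nonneg_left hAu_le (by positivity : (0:ℝ) ≤ C ^ 2 * β₁)]
      have h2 : β₁ * (C ^ 2 * u) ≤ β₁ * Real.arsinh v :=
        mul_le_mul_of_nonneg_left hCu hβ₁.le
      linarith
    · -- large u : use h(v)/2 ≥ v²/12 ≥ C² u
      have hu' : 0 < u := by nlinarith
      have hDu1 : 1 ≤ D * u := by
        rcases le_or_gt u 1 with h | h
        · nlinarith
        · nlinarith
      have hv1 : 1 ≤ v := by rw [hveq]; exact hDu1
      have hsq2 : Real.sqrt (1 + v ^ 2) ≤ 2 * v := by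
        have hle : 1 + v ^ 2 ≤ (2 * v) ^ 2 := by nlinarith
        calc Real.sqrt (1 + v ^ 2) ≤ Real.sqrt ((2 * v) ^ 2) := Real.sqrt_le_sqrt hle
          _ = 2 * v := Real.sqrt_sq (by positivity)
      have hhalf : v ^ 2 / 12 ≤ (v * Real.sqrt (1 + v ^ 2) - Real.arsinh v) / 2 := by
        have h2 := h_lb hv0
        have h3 : v ^ 2 / 6 ≤ v ^ 3 / (3 * Real.sqrt (1 + v ^ 2)) := by
          rw [div_le_div_iff₀ (by norm_num) (by positivity)]
          nlinarith [mul_le_mul_of_nonneg_left hsq2 (sq_nonneg v)]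
        linarith
      have hCu : C ^ 2 * u ≤ v ^ 2 / 12 := by
        rw [le_div_iff₀ (by norm_num)]
        have hv2 : v ^ 2 = (D * u) * (D * u) := by rw [hveq]; ring
        rw [hv2]
        nlinarith [mul_le_mul_of_nonneg_right hDu1 hu'.le]
      have h1 : C ^ 2 * β₁ * Real.arsinh u ≤ C ^ 2 * u := by
        nlinarith [mul_le_mul_of_nonneg_left hAu_le (by positivity : (0:ℝ) ≤ C ^ 2 * β₁),
          mul_nonneg (mul_nonneg (sq_nonneg C) hu) (by linarith : (0:ℝ) ≤ 1 - β₁)]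
      nlinarith [mul_nonneg hβ₁.le hAv0]
  -- combine
  have h1 : C * (β₂ * Real.arsinh u) ≤ C ^ 2 * β₁ * Real.arsinh u := by
    nlinarith [mul_le_mul_of_nonneg_right hβ (mul_nonneg (by linarith : (0:ℝ) ≤ C) hAu0)]
  nlinarith [hA, hB, h1]


private lemma phi_strictMonoOn {κ : ℝ} (hκ : κ < 1) :
    StrictMonoOn (fun t => Real.sinh t - κ * t) (Set.Ici 0) := by
  apply strictMonoOn_of_deriv_pos (convex_Ici 0)
  · exact (Real.continuous_sinh.sub (continuous_const.mul continuous_id)).continuousOn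
  · intro t _
    have hd : HasDerivAt (fun t => Real.sinh t - κ * t) (Real.cosh t - κ * 1) t :=
      (Real.hasDerivAt_sinh t).sub ((hasDerivAt_id t).const_mul κ)
    rw [hd.deriv]
    have := Real.one_le_cosh t
    linarith

private lemma exists_param {κ x : ℝ} (hκ : κ < 1) (hx : 0 ≤ x) :
    ∃ t, 0 ≤ t ∧ Real.sinh t - κ * t = x := by
  set T : ℝ := 8 * (x + 1) with hT
  have hT0 : 0 ≤ T := by nlinarith
  have hbig : x ≤ Real.sinh T - κ * T := by
    have he : (1 + T / 2) ^ 2 ≤ Real.exp T := by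
      have h1 : 1 + T / 2 ≤ Real.exp (T / 2) := by linarith [Real.add_one_le_exp (T / 2)]
      have h2 : Real.exp (T / 2) ^ 2 = Real.exp T := by
        rw [← Real.exp_nat_mul]
        congr 1
        push_cast
        ring
      calc (1 + T / 2) ^ 2 ≤ Real.exp (T / 2) ^ 2 := by nlinarith [Real.exp_pos (T / 2)]
        _ = Real.exp T := h2
    have hs : (Real.exp T - 1) / 2 ≤ Real.sinh T := by
      rw [Real.sinh_eq]
      have : Real.exp (-T) ≤ 1 := Real.exp_le_one_iff.mpr (by linarith)
      linarith
    have hκT : κ * T ≤ T := by nlinarith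
    nlinarith
  have hcont : ContinuousOn (fun t => Real.sinh t - κ * t) (Set.Icc 0 T) :=
    (Real.continuous_sinh.sub (continuous_const.mul continuous_id)).continuousOn
  have := intermediate_value_Icc hT0 hcont
  have hmem : x ∈ Set.Icc (Real.sinh 0 - κ * 0) (Real.sinh T - κ * T) := by
    simp only [Real.sinh_zero, mul_zero, sub_zero]
    exact ⟨hx, hbig⟩
  obtain ⟨t, ht, hteq⟩ := this hmem
  exact ⟨t, ht.1, hteq⟩

private lemma cosh_surj {y : ℝ} (hy : 1 ≤ y) : ∃ t, 0 ≤ t ∧ Real.cosh t = y := by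
  have hy2 : 0 ≤ y ^ 2 - 1 := by nlinarith
  set w : ℝ := Real.sqrt (y ^ 2 - 1) with hw
  have hw0 : 0 ≤ w := Real.sqrt_nonneg _
  have hw2 : w ^ 2 = y ^ 2 - 1 := Real.sq_sqrt hy2
  have hz1 : 1 ≤ y + w := by linarith
  have hz0 : 0 < y + w := by linarith
  refine ⟨Real.log (y + w), Real.log_nonneg hz1, ?_⟩
  rw [Real.cosh_eq, Real.exp_log hz0, Real.exp_neg, Real.exp_log hz0]
  have hinv : (y + w)⁻¹ = y - w := by
    apply inv_eq_of_mul_eq_one_right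
    nlinarith
  rw [hinv]; ring

private lemma Gf_cosh (κ : ℝ) {t : ℝ} (ht : 0 ≤ t) :
    Gf κ (Real.cosh t) = Real.sinh t - κ * t := by
  have h1 : Real.cosh t ^ 2 - 1 = Real.sinh t ^ 2 := by
    have := Real.cosh_sq t; linarith
  have h2 : Real.sqrt (Real.cosh t ^ 2 - 1) = Real.sinh t := by
    rw [h1]; exact Real.sqrt_sq (Real.sinh_nonneg_iff.mpr ht)
  unfold Gf
  rw [h2, Real.cosh_add_sinh, Real.log_exp]

private lemma Gf_strictMonoOn {κ : ℝ} (hκ : κ < 1) : StrictMonoOn (Gf κ) (Set.Ici 1) := by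
  intro y₁ hy₁ y₂ hy₂ hlt
  obtain ⟨t₁, ht₁, rfl⟩ := cosh_surj (hy₁ : 1 ≤ y₁)
  obtain ⟨t₂, ht₂, rfl⟩ := cosh_surj (hy₂ : 1 ≤ y₂)
  have htlt : t₁ < t₂ := by
    by_contra h
    push_neg at h
    exact absurd (Real.cosh_strictMonoOn.monotoneOn ht₂ ht₁ h) (not_le.mpr hlt)
  rw [Gf_cosh κ ht₁, Gf_cosh κ ht₂]
  exact phi_strictMonoOn hκ ht₁ ht₂ htlt

private lemma Hf_spec {κ x : ℝ} (hκ : κ < 1) (hx : 0 ≤ x) :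
    ∃ t, 0 ≤ t ∧ Real.sinh t - κ * t = x ∧ Hf κ x = Real.cosh t := by
  obtain ⟨t, ht, hteq⟩ := exists_param hκ hx
  have hmem : Real.cosh t ∈ Set.Ici (1:ℝ) := Real.one_le_cosh t
  have himg : x ∈ Gf κ '' Set.Ici 1 := ⟨Real.cosh t, hmem, by rw [Gf_cosh κ ht, hteq]⟩
  have h1 : Gf κ (Hf κ x) = x := Function.invFunOn_eq (by exact ⟨_, hmem, by rw [Gf_cosh κ ht, hteq]⟩)
  have h2 : Hf κ x ∈ Set.Ici (1:ℝ) := Function.invFunOn_mem (by exact ⟨_, hmem, by rw [Gf_cosh κ ht, hteq]⟩)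
  refine ⟨t, ht, hteq, ?_⟩
  apply (Gf_strictMonoOn hκ).injOn h2 hmem
  rw [h1, Gf_cosh κ ht, hteq]

private lemma cosh_half (t : ℝ) : Real.cosh t = 2 * Real.sinh (t / 2) ^ 2 + 1 := by
  have h1 := Real.cosh_two_mul (t / 2)
  have h2 := Real.cosh_sq (t / 2)
  rw [show 2 * (t / 2) = t by ring] at h1
  linarith

private lemma Hf_one_lt {κ x : ℝ} (hκ : κ ∈ Set.Ioo (0:ℝ) 1) (hx : 0 < x) : 1 < Hf κ x := by
  obtain ⟨t, ht, heq, hH⟩ := Hf_spec hκ.2 hx.le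
  have ht' : 0 < t := by
    rcases eq_or_lt_of_le ht with rfl | h
    · simp at heq; exact absurd heq.symm hx.ne'
    · exact h
  have : 0 < Real.sinh (t / 2) := by
    have := Real.sinh_lt_sinh.mpr (by linarith : (0:ℝ) < t / 2)
    simpa using this
  rw [hH, cosh_half]
  nlinarith

private lemma key_half (C x₁ x₂ κ₁ κ₂ : ℝ) (hC : 1 ≤ C) (hx₁ : 0 < x₁) (hx₂ : 0 < x₂)
    (hκ₁ : κ₁ ∈ Set.Ioo (0:ℝ) 1) (hκ₂ : κ₂ ∈ Set.Ioo (0:ℝ) 1)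
    (hx : x₁ ≤ C * x₂) (hκ : 1 - κ₂ ≤ C * (1 - κ₁)) :
    Hf κ₁ x₁ - 1 ≤ (2 * C ^ 4 + 12 * C ^ 2) ^ 2 * (Hf κ₂ x₂ - 1) := by
  obtain ⟨t₁, ht₁, heq₁, hH₁⟩ := Hf_spec hκ₁.2 hx₁.le
  obtain ⟨t₂, ht₂, heq₂, hH₂⟩ := Hf_spec hκ₂.2 hx₂.le
  obtain ⟨D, hD⟩ : ∃ D : ℝ, D = 2 * C ^ 4 + 12 * C ^ 2 := ⟨_, rfl⟩
  have hD2 : 2 * C ^ 4 ≤ D := by rw [hD]; nlinarith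
  have hD3 : 12 * C ^ 2 ≤ D := by rw [hD]; nlinarith
  have hD1 : 1 ≤ D := by nlinarith
  obtain ⟨u₂, hu₂⟩ : ∃ u : ℝ, u = Real.sinh (t₂ / 2) := ⟨_, rfl⟩
  have hu₂0 : 0 ≤ u₂ := by rw [hu₂]; exact Real.sinh_nonneg_iff.mpr (by linarith)
  obtain ⟨τ, hτ⟩ : ∃ τ : ℝ, τ = Real.arsinh (D * u₂) := ⟨_, rfl⟩
  have hτ0 : 0 ≤ τ := by rw [hτ]; exact Real.arsinh_nonneg_iff.mpr (by positivity)
  -- express x₂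
  have hsτ : Real.sinh τ = D * u₂ := by rw [hτ, Real.sinh_arsinh]
  have hcτ : Real.cosh τ = Real.sqrt (1 + (D * u₂) ^ 2) := by rw [hτ, Real.cosh_arsinh]
  have hars : Real.arsinh u₂ = t₂ / 2 := by rw [hu₂, Real.arsinh_sinh]
  have hcos : Real.sqrt (1 + u₂ ^ 2) = Real.cosh (t₂ / 2) := by
    rw [← Real.cosh_arsinh, hars]
  have hs2 : Real.sinh t₂ = 2 * u₂ * Real.cosh (t₂ / 2) := by
    have h := Real.sinh_two_mul (t₂ / 2)
    rw [show 2 * (t₂ / 2) = t₂ by ring] at h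
    rw [h, hu₂]
  have hx₂eq : x₂ = 2 * ((1 - κ₂) * Real.arsinh u₂ +
      (u₂ * Real.sqrt (1 + u₂ ^ 2) - Real.arsinh u₂)) := by
    rw [hars, hcos, ← heq₂, hs2]; ring
  -- the comparison point
  have hφτ : Real.sinh (2 * τ) - κ₁ * (2 * τ) = 2 * ((1 - κ₁) * Real.arsinh (D * u₂) +
      ((D * u₂) * Real.sqrt (1 + (D * u₂) ^ 2) - Real.arsinh (D * u₂))) := by
    rw [Real.sinh_two_mul, hsτ, hcτ, hτ]; ring
  have hcore := core_ineq C (1 - κ₁) (1 - κ₂) u₂ D (D * u₂) hC (by linarith [hκ₁.2])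
    (by linarith [hκ₁.1]) hκ (by exact hu₂0) hD2 hD3 rfl
  have hchain : x₁ ≤ Real.sinh (2 * τ) - κ₁ * (2 * τ) := by
    rw [hφτ]
    calc x₁ ≤ C * x₂ := hx
      _ = 2 * (C * ((1 - κ₂) * Real.arsinh u₂ +
            (u₂ * Real.sqrt (1 + u₂ ^ 2) - Real.arsinh u₂))) := by rw [hx₂eq]; ring
      _ ≤ _ := by linarith [hcore]
  -- monotonicity : t₁ ≤ 2τ
  have hmono := phi_strictMonoOn (κ := κ₁) hκ₁.2
  have ht₁le : t₁ ≤ 2 * τ := by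
    by_contra h
    push_neg at h
    have := hmono (by simpa using (by positivity : (0:ℝ) ≤ 2 * τ)) (by exact ht₁) h
    simp only at this
    rw [heq₁] at this
    linarith
  have hu₁ : Real.sinh (t₁ / 2) ≤ D * u₂ := by
    rw [← hsτ]
    exact Real.sinh_le_sinh.mpr (by linarith)
  have hu₁0 : 0 ≤ Real.sinh (t₁ / 2) := Real.sinh_nonneg_iff.mpr (by linarith)
  rw [hH₁, hH₂, cosh_half t₁, cosh_half t₂, ← hu₂, ← hD]
  nlinarith [mul_le_mul hu₁ hu₁ hu₁0 (by positivity), sq_nonneg u₂]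

/-- comparability of `H_{κ₁}(x₁) - 1` and `H_{κ₂}(x₂) - 1` for comparable data. -/
theorem statement5 (C₀ : ℝ) (hC₀ : 1 ≤ C₀) :
    ∃ C₁ : ℝ, 1 ≤ C₁ ∧ ∀ x₁ x₂ κ₁ κ₂ : ℝ, 0 < x₁ → 0 < x₂ →
      κ₁ ∈ Set.Ioo (0 : ℝ) 1 → κ₂ ∈ Set.Ioo (0 : ℝ) 1 →
      x₁ / x₂ ∈ Set.Icc (1 / C₀) C₀ → κ₁ / κ₂ ∈ Set.Icc (1 / C₀) C₀ →
      (1 - κ₁) / (1 - κ₂) ∈ Set.Icc (1 / C₀) C₀ →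
      1 / C₁ ≤ (Hf κ₁ x₁ - 1) / (Hf κ₂ x₂ - 1) ∧
        (Hf κ₁ x₁ - 1) / (Hf κ₂ x₂ - 1) ≤ C₁ := by
  have hC₀0 : 0 < C₀ := by linarith
  have hC₁1 : 1 ≤ (2 * C₀ ^ 4 + 12 * C₀ ^ 2) ^ 2 := by nlinarith [sq_nonneg C₀, sq_nonneg (C₀ ^ 2), pow_le_pow_left₀ (by norm_num : (0:ℝ) ≤ 1) hC₀ 4]
  refine ⟨(2 * C₀ ^ 4 + 12 * C₀ ^ 2) ^ 2, hC₁1, ?_⟩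
  intro x₁ x₂ κ₁ κ₂ hx₁ hx₂ hκ₁ hκ₂ hxr _ hβr
  have hβ₂ : 0 < 1 - κ₂ := by linarith [hκ₂.2]
  have hβ₁ : 0 < 1 - κ₁ := by linarith [hκ₁.2]
  have hinvC : C₀ * (1 / C₀) = 1 := by field_simp
  have hx12 : x₁ ≤ C₀ * x₂ := by
    have h := hxr.2; rw [div_le_iff₀ hx₂] at h; linarith
  have hx21 : x₂ ≤ C₀ * x₁ := by
    have h := hxr.1; rw [le_div_iff₀ hx₂] at h
    nlinarith [mul_le_mul_of_nonneg_left h hC₀0.le]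
  have hκ12 : 1 - κ₂ ≤ C₀ * (1 - κ₁) := by
    have h := hβr.1; rw [le_div_iff₀ hβ₂] at h
    nlinarith [mul_le_mul_of_nonneg_left h hC₀0.le]
  have hκ21 : 1 - κ₁ ≤ C₀ * (1 - κ₂) := by
    have h := hβr.2; rw [div_le_iff₀ hβ₂] at h; linarith
  have hA := key_half C₀ x₁ x₂ κ₁ κ₂ hC₀ hx₁ hx₂ hκ₁ hκ₂ hx12 hκ12
  have hB := key_half C₀ x₂ x₁ κ₂ κ₁ hC₀ hx₂ hx₁ hκ₂ hκ₁ hx21 hκ21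
  have ha : 0 < Hf κ₁ x₁ - 1 := by linarith [Hf_one_lt hκ₁ hx₁]
  have hb : 0 < Hf κ₂ x₂ - 1 := by linarith [Hf_one_lt hκ₂ hx₂]
  constructor
  · rw [div_le_div_iff₀ (by linarith) hb]
    linarith
  · rw [div_le_iff₀ hb]
    linarith
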